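/- Let v be a smooth vector field on an open subset of ℝ×ℝⁿ, D_t = ∂_t + v·∇, and let D₁,…,D_n be first-order spatial derivative operators (each D_ℓ = ∂_{x_{i_ℓ}} for some coordinate direction i_ℓ). For operators A, B write ad A (B) = [A,B] = A∘B − B∘A. Then for all integers m, n ≥ 0 the operator identity [D_t^m, D_n∘⋯∘D₁] = Σ_{α ∈ ℕ₀ⁿ, 1 ≤ |α| ≤ m} ( m! / (α! (m−|α|)!) ) ( (ad D_t)^{α_n}(D_n) ∘ ⋯ ∘ (ad D_t)^{α_1}(D₁) ) ∘ D_t^{m−|α|} holds when both sides are applied to any smooth function; in particular each factor (ad D_t)^{α_ℓ}(D_ℓ) is a differential operator of order at most 1, so the right-hand side is a sum of differential operators of order at most n. -/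

import Mathlib

noncomputable section

/-- Time-dependent scalar fields on ℝ × ℝⁿ. -/
abbrev TSF (n : ℕ) := ℝ → (Fin n → ℝ) → ℝ

/-- Operators on time-dependent scalar fields. -/
abbrev Opn (n : ℕ) := TSF n → TSF n

/-- Commutator of two operators: [A,B] = A∘B − B∘A. -/
def opComm {n : ℕ} (A B : Opn n) : Opn n :=
  fun f t x => A (B f) t x - B (A f) t x

/-- Iterated adjoint action: (ad A)^k(B). -/
def adPow {n : ℕ} (A : Opn n) : ℕ → Opn n → Opn n
  | 0, B => B
  | k + 1, B => opComm A (adPow A k B)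

/-- The material derivative operator D_t = ∂_t + v·∇ along the vector field v. -/
def Dtv {n : ℕ} (v : ℝ → (Fin n → ℝ) → (Fin n → ℝ)) : Opn n :=
  fun f t x => deriv (fun s => f s x) t + fderiv ℝ (f t) x (v t x)

/-- The spatial derivative operator D = ∂_{x_i}. -/
def Dsp {n : ℕ} (i : Fin n) : Opn n :=
  fun f t x => fderiv ℝ (f t) x (Pi.single i 1)

/-- Ordered composition of a finite family of operators: `compSeq ops = ops(k−1) ∘ ⋯ ∘ ops 0`
(the last operator is applied outermost). -/
def compSeq {n k : ℕ} (ops : Fin k → Opn n) : Opn n :=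
  (List.ofFn ops).foldr (fun o acc => acc ∘ o) id



variable {A : Type*} [Ring A]

/-- iterated ad in a ring -/
def adE (a : A) : ℕ → A → A
  | 0, b => b
  | k+1, b => a * adE a k b - adE a k b * a

/-- ordered product, last factor outermost (leftmost) -/
def prodSeqE {k : ℕ} (ops : Fin k → A) : A :=
  (List.ofFn ops).foldr (fun o acc => acc * o) 1

lemma prodSeqE_zero (ops : Fin 0 → A) : prodSeqE ops = 1 := rfl

lemma prodSeqE_succ {k : ℕ} (ops : Fin (k+1) → A) :
    prodSeqE ops = prodSeqE (fun ℓ => ops ℓ.succ) * ops 0 := by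
  unfold prodSeqE
  rw [List.ofFn_succ]
  rfl

lemma mul_adE (a b : A) (k : ℕ) :
    a * adE a k b = adE a (k+1) b + adE a k b * a := by
  simp [adE]

open Finset in
lemma pow_mul_eq_sum_adE (a b : A) (m : ℕ) :
    a ^ m * b = ∑ ij ∈ antidiagonal m, m.choose ij.1 • (adE a ij.1 b * a ^ ij.2) := by
  induction m with
  | zero => simp [adE]
  | succ m ih =>
    rw [Finset.sum_antidiagonal_choose_succ_nsmul (fun i j => adE a i b * a ^ j) m]
    have h1 : a ^ (m+1) * b = a * (a ^ m * b) := by rw [← mul_assoc, ← pow_succ']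
    rw [h1, ih, Finset.mul_sum]
    rw [← Finset.sum_add_distrib]
    refine Finset.sum_congr rfl ?_
    rintro ⟨i, j⟩ hij
    rw [Finset.HasAntidiagonal.mem_antidiagonal] at hij
    have hsymm : m.choose j = m.choose i := Nat.choose_symm_of_eq_add (by omega)
    rw [hsymm, mul_smul_comm, ← smul_add]
    congr 1
    rw [← mul_assoc, mul_adE, add_mul, mul_assoc, ← pow_succ']
    exact add_comm _ _

lemma coeff_step (m s i j : ℕ) (h : i + j + s = m) (B : ℝ) (hB : 0 < B) :
    (m.factorial : ℝ) / (B * ((m - s).factorial : ℕ)) * (((m - s).choose i : ℕ) : ℝ)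
      = (m.factorial : ℝ) / (((i.factorial : ℝ) * B) * ((j.factorial : ℕ) : ℝ)) := by
  rw [Nat.cast_choose ℝ (by omega : i ≤ m - s)]
  have hj : m - s - i = j := by omega
  rw [hj]
  have h1 : ((m - s).factorial : ℝ) ≠ 0 := Nat.cast_ne_zero.mpr (Nat.factorial_ne_zero _)
  have h2 : (i.factorial : ℝ) ≠ 0 := Nat.cast_ne_zero.mpr (Nat.factorial_ne_zero _)
  have h3 : (j.factorial : ℝ) ≠ 0 := Nat.cast_ne_zero.mpr (Nat.factorial_ne_zero _)
  field_simp

open Finset in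
lemma pow_mul_prodSeqE [Algebra ℝ A] {k : ℕ} (a : A) (ops : Fin k → A) (m : ℕ) :
    a ^ m * prodSeqE ops
      = ∑ α ∈ (Finset.Icc (0 : Fin k → ℕ) fun _ => m).filter (fun α => ∑ ℓ, α ℓ ≤ m),
          ((m.factorial : ℝ)
              / (((∏ ℓ, (α ℓ).factorial : ℕ) : ℝ) * ((m - ∑ ℓ, α ℓ).factorial : ℕ)))
            • (prodSeqE (fun ℓ => adE a (α ℓ) (ops ℓ)) * a ^ (m - ∑ ℓ, α ℓ)) := by
  induction k with
  | zero =>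
    have hset : (Finset.Icc (0 : Fin 0 → ℕ) fun _ => m).filter (fun α => ∑ ℓ, α ℓ ≤ m)
        = {0} := by
      ext α
      simp [Subsingleton.elim α 0]
    rw [hset, Finset.sum_singleton]
    have hc : ((m.factorial : ℝ)
        / (((∏ ℓ, ((0 : Fin 0 → ℕ) ℓ).factorial : ℕ) : ℝ)
            * ((m - ∑ ℓ, (0 : Fin 0 → ℕ) ℓ).factorial : ℕ))) = 1 := by
      simp [div_self, Nat.cast_ne_zero, Nat.factorial_ne_zero]
    rw [hc, one_smul, prodSeqE_zero, prodSeqE_zero, mul_one, one_mul]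
    simp
  | succ k ih =>
    rw [prodSeqE_succ, ← mul_assoc, ih, Finset.sum_mul]
    have step1 : ∀ β ∈ (Finset.Icc (0 : Fin k → ℕ) fun _ => m).filter
          (fun β => ∑ ℓ, β ℓ ≤ m),
        (((m.factorial : ℝ)
            / (((∏ ℓ, (β ℓ).factorial : ℕ) : ℝ) * ((m - ∑ ℓ, β ℓ).factorial : ℕ)))
          • (prodSeqE (fun ℓ => adE a (β ℓ) (ops ℓ.succ)) * a ^ (m - ∑ ℓ, β ℓ))) * ops 0
        = ∑ ij ∈ antidiagonal (m - ∑ ℓ, β ℓ),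
            (((m.factorial : ℝ)
                / (((∏ ℓ, (β ℓ).factorial : ℕ) : ℝ) * ((m - ∑ ℓ, β ℓ).factorial : ℕ)))
              * (((m - ∑ ℓ, β ℓ).choose ij.1 : ℕ) : ℝ))
            • ((prodSeqE (fun ℓ => adE a (β ℓ) (ops ℓ.succ)) * adE a ij.1 (ops 0))
                * a ^ ij.2) := by
      intro β _
      rw [smul_mul_assoc, mul_assoc, pow_mul_eq_sum_adE a (ops 0) (m - ∑ ℓ, β ℓ),
        Finset.mul_sum, Finset.smul_sum]
      refine Finset.sum_congr rfl fun ij _ => ?_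
      rw [← Nat.cast_smul_eq_nsmul ℝ, mul_smul_comm, smul_smul]
      congr 1
      rw [← mul_assoc]
    rw [Finset.sum_congr rfl step1, Finset.sum_sigma']
    refine Finset.sum_nbij' (fun p => Fin.cons p.2.1 p.1) (fun α => ⟨fun ℓ => α ℓ.succ, (α 0, m - ∑ ℓ, α ℓ)⟩) ?_ ?_ ?_ ?_ ?_
    · rintro ⟨β, i, j⟩ hp
      rw [Finset.mem_sigma, Finset.mem_filter, Finset.mem_Icc, Finset.HasAntidiagonal.mem_antidiagonal] at hp
      dsimp only at hp
      obtain ⟨⟨⟨-, hle⟩, hs⟩, hij⟩ := hp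
      rw [Finset.mem_filter, Finset.mem_Icc]
      have hsum : ∑ ℓ, Fin.cons i β ℓ = i + ∑ ℓ, β ℓ := by
        rw [Fin.sum_cons]
      refine ⟨⟨by intro ℓ; exact Nat.zero_le _, ?_⟩, ?_⟩
      · intro ℓ
        refine Fin.cases ?_ ?_ ℓ
        · simpa using by omega
        · intro ℓ'
          simpa using hle ℓ'
      · rw [hsum]; omega
    · intro α hα
      rw [Finset.mem_filter, Finset.mem_Icc] at hα
      obtain ⟨⟨-, hle⟩, hs⟩ := hα
      simp only [Finset.mem_sigma, Finset.mem_filter, Finset.mem_Icc, Finset.HasAntidiagonal.mem_antidiagonal,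
        Pi.le_def]
      have h0 : ∑ ℓ, α ℓ = α 0 + ∑ ℓ : Fin k, α ℓ.succ := by
        rw [Fin.sum_univ_succ]
      have hle0 : α 0 ≤ m := hle 0
      refine ⟨⟨⟨fun ℓ => Nat.zero_le _, fun ℓ => hle ℓ.succ⟩, by omega⟩, by omega⟩
    · rintro ⟨β, i, j⟩ hp
      rw [Finset.mem_sigma, Finset.mem_filter, Finset.mem_Icc, Finset.HasAntidiagonal.mem_antidiagonal] at hp
      dsimp only at hp
      obtain ⟨⟨⟨-, hle⟩, hs⟩, hij⟩ := hp
      have hsum : (∑ ℓ, Fin.cons i β ℓ) = i + ∑ ℓ, β ℓ := by rw [Fin.sum_cons]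
      have h1 : (fun ℓ : Fin k => (Fin.cons i β : Fin (k+1) → ℕ) ℓ.succ) = β := by
        funext ℓ; simp
      have h2 : (Fin.cons i β : Fin (k+1) → ℕ) 0 = i := by simp
      have h3 : m - ∑ ℓ, (Fin.cons i β : Fin (k+1) → ℕ) ℓ = j := by rw [hsum]; omega
      simp only [h1, h2, h3]
    · intro α hα
      exact Fin.cons_self_tail α
    · rintro ⟨β, i, j⟩ hp
      rw [Finset.mem_sigma, Finset.mem_filter, Finset.mem_Icc, Finset.HasAntidiagonal.mem_antidiagonal] at hp
      dsimp only at hp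
      obtain ⟨⟨⟨-, hle⟩, hs⟩, hij⟩ := hp
      have hsum : (∑ ℓ, Fin.cons i β ℓ) = i + ∑ ℓ, β ℓ := by rw [Fin.sum_cons]
      have hprod : ((∏ ℓ, ((Fin.cons i β : Fin (k+1) → ℕ) ℓ).factorial : ℕ) : ℝ)
          = (i.factorial : ℝ) * ((∏ ℓ, (β ℓ).factorial : ℕ) : ℝ) := by
        rw [show (∏ ℓ, ((Fin.cons i β : Fin (k+1) → ℕ) ℓ).factorial)
            = i.factorial * ∏ ℓ, (β ℓ).factorial from ?_]
        · push_cast; ring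
        · rw [Fin.prod_univ_succ]; simp [Fin.cons_succ]
      have hexp : m - ∑ ℓ, (Fin.cons i β : Fin (k+1) → ℕ) ℓ = j := by
        rw [hsum]; omega
      have hP : prodSeqE (fun ℓ => adE a ((Fin.cons i β : Fin (k+1) → ℕ) ℓ) (ops ℓ))
          = prodSeqE (fun ℓ => adE a (β ℓ) (ops ℓ.succ)) * adE a i (ops 0) := by
        rw [prodSeqE_succ]
        simp [Fin.cons_succ]
      rw [hP, hexp, hprod]
      rw [coeff_step m (∑ ℓ, β ℓ) i j (by omega) _ ?_]
      · positivity

open Function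

variable {n : ℕ}

/-- Smooth time-dependent scalar fields as a submodule. -/
def SmoothTSF (n : ℕ) : Submodule ℝ (TSF n) where
  carrier := {F | ∀ N : ℕ, ContDiff ℝ N (Function.uncurry F)}
  add_mem' := fun hf hg N => (hf N).add (hg N)
  zero_mem' := fun _ => contDiff_const
  smul_mem' := fun c _ hf N => (hf N).const_smul c

lemma deriv_slice {F : TSF n} (hF : Differentiable ℝ (uncurry F)) (t : ℝ) (x : Fin n → ℝ) :
    deriv (fun s => F s x) t = fderiv ℝ (uncurry F) (t, x) (1, 0) := by
  have h : HasFDerivAt (fun s : ℝ => (s, x))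
      ((ContinuousLinearMap.id ℝ ℝ).prod 0) t :=
    (hasFDerivAt_id t).prodMk (hasFDerivAt_const x t)
  have h2 : HasFDerivAt (fun s => F s x)
      ((fderiv ℝ (uncurry F) (t, x)).comp ((ContinuousLinearMap.id ℝ ℝ).prod 0)) t :=
    by have := (hF (t, x)).hasFDerivAt.comp t h; exact this
  rw [h2.hasDerivAt.deriv]
  rfl

lemma fderiv_slice {F : TSF n} (hF : Differentiable ℝ (uncurry F)) (t : ℝ) (x : Fin n → ℝ)
    (w : Fin n → ℝ) :
    fderiv ℝ (F t) x w = fderiv ℝ (uncurry F) (t, x) (0, w) := by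
  have h : HasFDerivAt (fun y : Fin n → ℝ => (t, y))
      ((0 : (Fin n → ℝ) →L[ℝ] ℝ).prod (ContinuousLinearMap.id ℝ (Fin n → ℝ))) x :=
    (hasFDerivAt_const t x).prodMk (hasFDerivAt_id x)
  have h2 : HasFDerivAt (F t)
      ((fderiv ℝ (uncurry F) (t, x)).comp
        ((0 : (Fin n → ℝ) →L[ℝ] ℝ).prod (ContinuousLinearMap.id ℝ (Fin n → ℝ)))) x :=
    (hF (t, x)).hasFDerivAt.comp x h
  rw [h2.fderiv]
  rfl

lemma diff_of_mem {F : TSF n} (hF : F ∈ SmoothTSF n) : Differentiable ℝ (uncurry F) :=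
  (hF 1).differentiable (by norm_cast)

lemma Dtv_eq_fderiv (v : ℝ → (Fin n → ℝ) → (Fin n → ℝ)) {F : TSF n}
    (hF : Differentiable ℝ (uncurry F)) (t : ℝ) (x : Fin n → ℝ) :
    Dtv v F t x = fderiv ℝ (uncurry F) (t, x) (1, v t x) := by
  rw [Dtv, deriv_slice hF, fderiv_slice hF, ← map_add]
  norm_num

lemma Dsp_eq_fderiv (i : Fin n) {F : TSF n}
    (hF : Differentiable ℝ (uncurry F)) (t : ℝ) (x : Fin n → ℝ) :
    Dsp i F t x = fderiv ℝ (uncurry F) (t, x) (0, Pi.single i 1) :=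
  fderiv_slice hF t x _

lemma mem_Dtv {v : ℝ → (Fin n → ℝ) → (Fin n → ℝ)}
    (hv : ∀ N : ℕ, ContDiff ℝ N (Function.uncurry v))
    {F : TSF n} (hF : F ∈ SmoothTSF n) : Dtv v F ∈ SmoothTSF n := by
  intro N
  have hFd : Differentiable ℝ (uncurry F) := diff_of_mem hF
  have he : uncurry (Dtv v F)
      = fun p : ℝ × (Fin n → ℝ) => fderiv ℝ (uncurry F) p (1, uncurry v p) := by
    funext p
    exact Dtv_eq_fderiv v hFd p.1 p.2
  rw [he]
  have h1 : ContDiff ℝ N (fderiv ℝ (uncurry F)) :=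
    (hF (N + 1)).fderiv_right (by norm_cast)
  exact h1.clm_apply (contDiff_const.prodMk (hv N))

lemma mem_Dsp (i : Fin n) {F : TSF n} (hF : F ∈ SmoothTSF n) : Dsp i F ∈ SmoothTSF n := by
  intro N
  have hFd : Differentiable ℝ (uncurry F) := diff_of_mem hF
  have he : uncurry (Dsp i F)
      = fun p : ℝ × (Fin n → ℝ) => fderiv ℝ (uncurry F) p (0, Pi.single i 1) := by
    funext p
    exact Dsp_eq_fderiv i hFd p.1 p.2
  rw [he]
  have h1 : ContDiff ℝ N (fderiv ℝ (uncurry F)) :=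
    (hF (N + 1)).fderiv_right (by norm_cast)
  exact h1.clm_apply contDiff_const

lemma uncurry_add (f g : TSF n) : uncurry (f + g) = uncurry f + uncurry g := rfl
lemma uncurry_smul (c : ℝ) (f : TSF n) : uncurry (c • f) = c • uncurry f := rfl

lemma Dtv_add (v : ℝ → (Fin n → ℝ) → (Fin n → ℝ)) {f g : TSF n}
    (hf : Differentiable ℝ (uncurry f)) (hg : Differentiable ℝ (uncurry g))
    (t : ℝ) (x : Fin n → ℝ) :
    Dtv v (f + g) t x = Dtv v f t x + Dtv v g t x := by
  have hfg : Differentiable ℝ (uncurry (f + g)) := by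
    rw [uncurry_add]; exact hf.add hg
  rw [Dtv_eq_fderiv v hfg, Dtv_eq_fderiv v hf, Dtv_eq_fderiv v hg]
  have : fderiv ℝ (uncurry (f + g)) (t, x)
      = fderiv ℝ (uncurry f) (t, x) + fderiv ℝ (uncurry g) (t, x) := by
    rw [uncurry_add]
    exact fderiv_add (hf.differentiableAt) (hg.differentiableAt)
  rw [this]
  rfl

lemma Dtv_smul (v : ℝ → (Fin n → ℝ) → (Fin n → ℝ)) {f : TSF n} (c : ℝ)
    (hf : Differentiable ℝ (uncurry f)) (t : ℝ) (x : Fin n → ℝ) :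
    Dtv v (c • f) t x = c * Dtv v f t x := by
  have hcf : Differentiable ℝ (uncurry (c • f)) := by
    rw [uncurry_smul]; exact hf.const_smul c
  rw [Dtv_eq_fderiv v hcf, Dtv_eq_fderiv v hf]
  have : fderiv ℝ (uncurry (c • f)) (t, x) = c • fderiv ℝ (uncurry f) (t, x) := by
    rw [uncurry_smul]
    exact fderiv_const_smul (hf.differentiableAt) c
  rw [this]
  rfl

lemma Dsp_add (i : Fin n) {f g : TSF n}
    (hf : Differentiable ℝ (uncurry f)) (hg : Differentiable ℝ (uncurry g))
    (t : ℝ) (x : Fin n → ℝ) :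
    Dsp i (f + g) t x = Dsp i f t x + Dsp i g t x := by
  have hfg : Differentiable ℝ (uncurry (f + g)) := by
    rw [uncurry_add]; exact hf.add hg
  rw [Dsp_eq_fderiv i hfg, Dsp_eq_fderiv i hf, Dsp_eq_fderiv i hg]
  have : fderiv ℝ (uncurry (f + g)) (t, x)
      = fderiv ℝ (uncurry f) (t, x) + fderiv ℝ (uncurry g) (t, x) := by
    rw [uncurry_add]
    exact fderiv_add (hf.differentiableAt) (hg.differentiableAt)
  rw [this]
  rfl

lemma Dsp_smul (i : Fin n) {f : TSF n} (c : ℝ)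
    (hf : Differentiable ℝ (uncurry f)) (t : ℝ) (x : Fin n → ℝ) :
    Dsp i (c • f) t x = c * Dsp i f t x := by
  have hcf : Differentiable ℝ (uncurry (c • f)) := by
    rw [uncurry_smul]; exact hf.const_smul c
  rw [Dsp_eq_fderiv i hcf, Dsp_eq_fderiv i hf]
  have : fderiv ℝ (uncurry (c • f)) (t, x) = c • fderiv ℝ (uncurry f) (t, x) := by
    rw [uncurry_smul]
    exact fderiv_const_smul (hf.differentiableAt) c
  rw [this]
  rfl

/-- D_t as a linear endomorphism of smooth fields. -/
def DtE (v : ℝ → (Fin n → ℝ) → (Fin n → ℝ))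
    (hv : ∀ N : ℕ, ContDiff ℝ N (Function.uncurry v)) :
    Module.End ℝ (SmoothTSF n) where
  toFun f := ⟨Dtv v f.1, mem_Dtv hv f.2⟩
  map_add' f g := by
    apply Subtype.ext
    funext t x
    exact Dtv_add v (diff_of_mem f.2) (diff_of_mem g.2) t x
  map_smul' c f := by
    apply Subtype.ext
    funext t x
    exact Dtv_smul v c (diff_of_mem f.2) t x

/-- D_{x_i} as a linear endomorphism of smooth fields. -/
def DsE (i : Fin n) : Module.End ℝ (SmoothTSF n) where
  toFun f := ⟨Dsp i f.1, mem_Dsp i f.2⟩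
  map_add' f g := by
    apply Subtype.ext
    funext t x
    exact Dsp_add i (diff_of_mem f.2) (diff_of_mem g.2) t x
  map_smul' c f := by
    apply Subtype.ext
    funext t x
    exact Dsp_smul i c (diff_of_mem f.2) t x

lemma compSeq_zero (ops : Fin 0 → Opn n) (F : TSF n) : compSeq ops F = F := rfl

lemma compSeq_succ {k : ℕ} (ops : Fin (k+1) → Opn n) (F : TSF n) :
    compSeq ops F = compSeq (fun ℓ => ops ℓ.succ) (ops 0 F) := by
  unfold compSeq
  rw [List.ofFn_succ]
  rfl

lemma DtE_pow (v : ℝ → (Fin n → ℝ) → (Fin n → ℝ))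
    (hv : ∀ N : ℕ, ContDiff ℝ N (Function.uncurry v)) (m : ℕ) (f : ↥(SmoothTSF n)) :
    (((DtE v hv) ^ m) f).1 = (Dtv v)^[m] f.1 := by
  induction m with
  | zero => rfl
  | succ m ih =>
    rw [pow_succ', Function.iterate_succ_apply', Module.End.mul_apply]
    show Dtv v ((((DtE v hv) ^ m) f).1) = _
    rw [ih]

lemma prod_bridge (k : ℕ) :
    ∀ (ops : Fin k → Opn n) (L : Fin k → Module.End ℝ (SmoothTSF n)),
      (∀ ℓ (f : ↥(SmoothTSF n)), (L ℓ f).1 = ops ℓ f.1) →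
      ∀ f : ↥(SmoothTSF n), (prodSeqE L f).1 = compSeq ops f.1 := by
  induction k with
  | zero => intro ops L h f; rfl
  | succ k ih =>
    intro ops L h f
    rw [prodSeqE_succ, compSeq_succ, Module.End.mul_apply]
    rw [ih (fun ℓ => ops ℓ.succ) (fun ℓ => L ℓ.succ) (fun ℓ g => h ℓ.succ g) (L 0 f)]
    rw [h 0 f]

lemma adE_bridge (v : ℝ → (Fin n → ℝ) → (Fin n → ℝ))
    (hv : ∀ N : ℕ, ContDiff ℝ N (Function.uncurry v)) (i : Fin n) (k : ℕ) :
    ∀ f : ↥(SmoothTSF n),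
      (adE (DtE v hv) k (DsE i) f).1 = adPow (Dtv v) k (Dsp i) f.1 := by
  induction k with
  | zero => intro f; rfl
  | succ k ih =>
    intro f
    show ((DtE v hv * adE (DtE v hv) k (DsE i) - adE (DtE v hv) k (DsE i) * DtE v hv) f).1 = _
    rw [LinearMap.sub_apply]
    funext t x
    have hval : ((DtE v hv * adE (DtE v hv) k (DsE i)) f
          - (adE (DtE v hv) k (DsE i) * DtE v hv) f).1
        = ((DtE v hv * adE (DtE v hv) k (DsE i)) f).1
          - ((adE (DtE v hv) k (DsE i) * DtE v hv) f).1 := rfl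
    rw [hval]
    have h1 : ((DtE v hv * adE (DtE v hv) k (DsE i)) f).1
        = Dtv v (adPow (Dtv v) k (Dsp i) f.1) := by
      rw [Module.End.mul_apply]
      show Dtv v ((adE (DtE v hv) k (DsE i) f).1) = _
      rw [ih f]
    have h2 : ((adE (DtE v hv) k (DsE i) * DtE v hv) f).1
        = adPow (Dtv v) k (Dsp i) (Dtv v f.1) := by
      rw [Module.End.mul_apply, ih (DtE v hv f)]
      rfl
    rw [h1, h2]
    rfl

/-- **commutator of material and spatial derivatives, Komatsu-type identity.**
For first-order spatial derivatives `D₁,…,D_n` (here `Dsp (dir 0), …, Dsp (dir (nn−1))`) and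
the material derivative `D_t = ∂_t + v·∇`, the operator identity
`[D_t^m, D_n∘⋯∘D₁] = Σ_{α ∈ ℕ₀ⁿ, 1 ≤ |α| ≤ m} (m!/(α!(m−|α|)!))
  ((ad D_t)^{α_n}(D_n) ∘ ⋯ ∘ (ad D_t)^{α_1}(D₁)) ∘ D_t^{m−|α|}`
holds applied to any smooth function. -/
theorem material_spatial_commutator_identity
    (n : ℕ) (v : ℝ → (Fin n → ℝ) → (Fin n → ℝ))
    (hv : ∀ N : ℕ, ContDiff ℝ N (Function.uncurry v))
    (m nn : ℕ) (dir : Fin nn → Fin n)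
    (F : TSF n) (hF : ∀ N : ℕ, ContDiff ℝ N (Function.uncurry F))
    (t : ℝ) (x : Fin n → ℝ) :
    ((Dtv v)^[m] (compSeq (fun ℓ => Dsp (dir ℓ)) F)) t x
      - (compSeq (fun ℓ => Dsp (dir ℓ)) ((Dtv v)^[m] F)) t x
    = ∑ α ∈ (Finset.Icc (0 : Fin nn → ℕ) fun _ => m).filter
          (fun α => 1 ≤ ∑ ℓ, α ℓ ∧ ∑ ℓ, α ℓ ≤ m),
        ((m.factorial : ℝ)
            / (((∏ ℓ, (α ℓ).factorial : ℕ) : ℝ) * ((m - ∑ ℓ, α ℓ).factorial : ℕ)))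
          * (compSeq (fun ℓ => adPow (Dtv v) (α ℓ) (Dsp (dir ℓ)))
              ((Dtv v)^[m - ∑ ℓ, α ℓ] F)) t x := by
  have hFm : F ∈ SmoothTSF n := hF
  have hbr : ∀ ℓ (f : ↥(SmoothTSF n)),
      ((fun ℓ => DsE (dir ℓ)) ℓ f).1 = Dsp (dir ℓ) f.1 := fun _ _ => rfl
  have key := pow_mul_prodSeqE (DtE v hv) (fun ℓ => DsE (dir ℓ)) m
  have hsplit : ((Finset.Icc (0 : Fin nn → ℕ) fun _ => m).filter fun α => ∑ ℓ, α ℓ ≤ m)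
      = insert 0 ((Finset.Icc (0 : Fin nn → ℕ) fun _ => m).filter
          fun α => 1 ≤ ∑ ℓ, α ℓ ∧ ∑ ℓ, α ℓ ≤ m) := by
    ext α
    simp only [Finset.mem_insert, Finset.mem_filter, Finset.mem_Icc, Pi.le_def]
    constructor
    · rintro ⟨hIcc, hle⟩
      by_cases h0 : α = 0
      · exact Or.inl h0
      · refine Or.inr ⟨hIcc, ?_, hle⟩
        by_contra hcon
        push_neg at hcon
        apply h0
        have hz : ∑ ℓ, α ℓ = 0 := by omega
        funext ℓ
        exact Finset.sum_eq_zero_iff.mp hz ℓ (Finset.mem_univ ℓ)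
    · rintro (rfl | ⟨hIcc, _, hle⟩)
      · exact ⟨⟨fun ℓ => le_rfl, fun ℓ => Nat.zero_le m⟩, by simp⟩
      · exact ⟨hIcc, hle⟩
  have h0notmem : (0 : Fin nn → ℕ) ∉ (Finset.Icc (0 : Fin nn → ℕ) fun _ => m).filter
      (fun α => 1 ≤ ∑ ℓ, α ℓ ∧ ∑ ℓ, α ℓ ≤ m) := by
    simp
  rw [hsplit, Finset.sum_insert h0notmem] at key
  have h00 : ((m.factorial : ℝ)
        / (((∏ ℓ, ((0 : Fin nn → ℕ) ℓ).factorial : ℕ) : ℝ)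
            * ((m - ∑ ℓ, (0 : Fin nn → ℕ) ℓ).factorial : ℕ)))
      • (prodSeqE (fun ℓ => adE (DtE v hv) ((0 : Fin nn → ℕ) ℓ) (DsE (dir ℓ)))
          * (DtE v hv) ^ (m - ∑ ℓ, (0 : Fin nn → ℕ) ℓ))
      = prodSeqE (fun ℓ => DsE (dir ℓ)) * (DtE v hv) ^ m := by
    have hc : ((m.factorial : ℝ)
        / (((∏ ℓ, ((0 : Fin nn → ℕ) ℓ).factorial : ℕ) : ℝ)
            * ((m - ∑ ℓ, (0 : Fin nn → ℕ) ℓ).factorial : ℕ))) = 1 := by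
      simp [Nat.factorial_ne_zero]
    rw [hc, one_smul]
    have hP : (fun ℓ => adE (DtE v hv) ((0 : Fin nn → ℕ) ℓ) (DsE (dir ℓ)))
        = fun ℓ : Fin nn => DsE (dir ℓ) := rfl
    rw [hP]
    simp
  rw [h00] at key
  have keyD : (DtE v hv) ^ m * prodSeqE (fun ℓ => DsE (dir ℓ))
        - prodSeqE (fun ℓ => DsE (dir ℓ)) * (DtE v hv) ^ m
      = ∑ α ∈ (Finset.Icc (0 : Fin nn → ℕ) fun _ => m).filter
            (fun α => 1 ≤ ∑ ℓ, α ℓ ∧ ∑ ℓ, α ℓ ≤ m),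
          ((m.factorial : ℝ)
              / (((∏ ℓ, (α ℓ).factorial : ℕ) : ℝ) * ((m - ∑ ℓ, α ℓ).factorial : ℕ)))
            • (prodSeqE (fun ℓ => adE (DtE v hv) (α ℓ) (DsE (dir ℓ)))
                * (DtE v hv) ^ (m - ∑ ℓ, α ℓ)) := by
    rw [key]; exact add_sub_cancel_left (_ : Module.End ℝ (SmoothTSF n)) _
  have e1 : (Dtv v)^[m] (compSeq (fun ℓ => Dsp (dir ℓ)) F)
      = (((DtE v hv) ^ m * prodSeqE (fun ℓ => DsE (dir ℓ))) ⟨F, hFm⟩).1 := by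
    rw [Module.End.mul_apply, DtE_pow v hv m,
      prod_bridge nn (fun ℓ => Dsp (dir ℓ)) (fun ℓ => DsE (dir ℓ)) hbr ⟨F, hFm⟩]
  have e2 : compSeq (fun ℓ => Dsp (dir ℓ)) ((Dtv v)^[m] F)
      = ((prodSeqE (fun ℓ => DsE (dir ℓ)) * (DtE v hv) ^ m) ⟨F, hFm⟩).1 := by
    rw [Module.End.mul_apply,
      prod_bridge nn (fun ℓ => Dsp (dir ℓ)) (fun ℓ => DsE (dir ℓ)) hbr
        (((DtE v hv) ^ m) ⟨F, hFm⟩),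
      DtE_pow v hv m]
  rw [e1, e2]
  have e3 : (((DtE v hv) ^ m * prodSeqE (fun ℓ => DsE (dir ℓ))) ⟨F, hFm⟩).1 t x
        - ((prodSeqE (fun ℓ => DsE (dir ℓ)) * (DtE v hv) ^ m) ⟨F, hFm⟩).1 t x
      = ((((DtE v hv) ^ m * prodSeqE (fun ℓ => DsE (dir ℓ))
          - prodSeqE (fun ℓ => DsE (dir ℓ)) * (DtE v hv) ^ m) ⟨F, hFm⟩)).1 t x := rfl
  rw [e3, keyD, LinearMap.sum_apply, AddSubmonoidClass.coe_finset_sum,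
    Finset.sum_apply, Finset.sum_apply]
  refine Finset.sum_congr rfl fun α hα => ?_
  have hterm : (((prodSeqE (fun ℓ => adE (DtE v hv) (α ℓ) (DsE (dir ℓ))))
        * (DtE v hv) ^ (m - ∑ ℓ, α ℓ)) ⟨F, hFm⟩).1
      = compSeq (fun ℓ => adPow (Dtv v) (α ℓ) (Dsp (dir ℓ))) ((Dtv v)^[m - ∑ ℓ, α ℓ] F) := by
    rw [Module.End.mul_apply,
      prod_bridge nn (fun ℓ => adPow (Dtv v) (α ℓ) (Dsp (dir ℓ)))
        (fun ℓ => adE (DtE v hv) (α ℓ) (DsE (dir ℓ)))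
        (fun ℓ g => adE_bridge v hv (dir ℓ) (α ℓ) g)
        (((DtE v hv) ^ (m - ∑ ℓ, α ℓ)) ⟨F, hFm⟩),
      DtE_pow v hv (m - ∑ ℓ, α ℓ)]
  calc ((((m.factorial : ℝ)
          / (((∏ ℓ, (α ℓ).factorial : ℕ) : ℝ) * ((m - ∑ ℓ, α ℓ).factorial : ℕ)))
        • (prodSeqE (fun ℓ => adE (DtE v hv) (α ℓ) (DsE (dir ℓ)))
            * (DtE v hv) ^ (m - ∑ ℓ, α ℓ)) : Module.End ℝ (SmoothTSF n)) ⟨F, hFm⟩).1 t x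
      = ((m.factorial : ℝ)
          / (((∏ ℓ, (α ℓ).factorial : ℕ) : ℝ) * ((m - ∑ ℓ, α ℓ).factorial : ℕ)))
        * (((prodSeqE (fun ℓ => adE (DtE v hv) (α ℓ) (DsE (dir ℓ)))
            * (DtE v hv) ^ (m - ∑ ℓ, α ℓ)) ⟨F, hFm⟩).1 t x) := rfl
    _ = _ := by rw [hterm]
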